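/- Let ρ and A be real numbers with 2 ≤ ρ ≤ 3 and max(0.5, ρ − 1) ≤ A ≤ 3ρ − 1. Then (√ρ + 3/√ρ + √ρ + A/√ρ) / (2·(1/√ρ + √(1 − 1/ρ)) + 2·√A) ≤ 1.203. -/
import Mathlib

theorem simple_sibling_top_bound_rho_ge_two
    (ρ A : ℝ) (hρ1 : 2 ≤ ρ) (hρ2 : ρ ≤ 3)
    (hA1 : max 0.5 (ρ - 1) ≤ A) (hA2 : A ≤ 3 * ρ - 1) :
    (Real.sqrt ρ + 3 / Real.sqrt ρ + Real.sqrt ρ + A / Real.sqrt ρ)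
      / (2 * (1 / Real.sqrt ρ + Real.sqrt (1 - 1 / ρ)) + 2 * Real.sqrt A) ≤ 1.203 := by
  have hAρ : ρ - 1 ≤ A := le_trans (le_max_right _ _) hA1
  have hρ0 : (0:ℝ) < ρ := by linarith
  have hA0 : (0:ℝ) < A := by linarith
  set s := Real.sqrt ρ with hs
  set u := Real.sqrt (ρ - 1) with hu
  set v := Real.sqrt A with hv
  have hs0 : 0 < s := Real.sqrt_pos.2 hρ0
  have hv0 : 0 < v := Real.sqrt_pos.2 hA0
  have hu0 : 0 ≤ u := Real.sqrt_nonneg _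
  have hs2 : s^2 = ρ := Real.sq_sqrt hρ0.le
  have hu2 : u^2 = ρ - 1 := Real.sq_sqrt (by linarith)
  have hv2 : v^2 = A := Real.sq_sqrt hA0.le
  have h1u : 1 ≤ u := by nlinarith
  have hu2' : u^2 ≤ 2 := by nlinarith
  have hr : Real.sqrt (1 - 1/ρ) = u/s := by
    rw [show 1 - 1/ρ = (ρ-1)/ρ by field_simp, Real.sqrt_div (by linarith)]
  rw [hr]
  have hD : 0 < 2 * (1/s + u/s) + 2 * v := by positivity
  rw [div_le_iff₀ hD]
  -- key squared inequality
  have keysq : (A + 2*u^2 - 2.406*u + 2.594)^2 ≤ 5.788836 * (u^2+1) * A := by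
    have h3 : u^2 ≤ A := by linarith
    have h4 : A ≤ 3*u^2 + 2 := by linarith
    nlinarith [mul_nonneg (sub_nonneg.2 h3) (sub_nonneg.2 h4), sq_nonneg (u-1), sq_nonneg (u^2-1),
      mul_nonneg (mul_nonneg (sub_nonneg.2 h1u) (sub_nonneg.2 h1u)) (sub_nonneg.2 hu2'),
      mul_nonneg (sub_nonneg.2 h3) (sub_nonneg.2 h1u),
      mul_nonneg (sub_nonneg.2 h4) (sub_nonneg.2 h1u)]
  have hsv2 : (s*v)^2 = ρ * A := by rw [mul_pow, hs2, hv2]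
  have key2 : A + 2*u^2 - 2.406*u + 2.594 ≤ 2.406 * (s*v) := by
    have hq : 0 < A + 2*u^2 - 2.406*u + 2.594 := by nlinarith
    have hsv0 : 0 ≤ s*v := by positivity
    have hPQ : (A + 2*u^2 - 2.406*u + 2.594)^2 ≤ (2.406 * (s*v))^2 := by
      calc (A + 2*u^2 - 2.406*u + 2.594)^2 ≤ 5.788836 * (u^2+1) * A := keysq
        _ = 5.788836 * (ρ * A) := by rw [hu2]; ring
        _ = (2.406 * (s*v))^2 := by rw [mul_pow, hsv2]; norm_num
    have hQ0 : (0:ℝ) ≤ 2.406 * (s*v) := by positivity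
    exact (pow_le_pow_iff_left₀ hq.le hQ0 two_ne_zero).1 hPQ
  have e1 : s + 3/s + s + A/s = (2*ρ + 3 + A)/s := by
    field_simp
    linear_combination (2:ℝ) * hs2
  have e2 : 1.203 * (2 * (1/s + u/s) + 2*v) = (2.406 + 2.406*u + 2.406*(s*v))/s := by
    field_simp
    ring
  rw [e1, e2, div_le_div_iff₀ hs0 hs0]
  have hfin : 2*ρ + 3 + A ≤ 2.406 + 2.406*u + 2.406*(s*v) := by linarith [key2, hu2]
  exact mul_le_mul_of_nonneg_right hfin hs0.le
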